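/- (Lemma of Inaba, Katoh and Imai, Lemma 2.1 of the paper.) Let X be a finite nonempty set of points in ℝ^d, and let x₁, …, x_M be independent random points each uniformly distributed on X, with sample mean μ(S) = (1/M) Σ_{i=1}^M x_i. Then for every δ > 0, with probability at least 1 − δ it holds that Φ(X, μ(S)) ≤ (1 + 1/(δM)) · Φ(X, μ(X)). -/

import Mathlib

open Finset

/-- The centroid of a finite point set. -/
noncomputable def centroid {d : ℕ} (X : Finset (EuclideanSpace ℝ (Fin d))) :
    EuclideanSpace ℝ (Fin d) :=
  (X.card : ℝ)⁻¹ • ∑ x ∈ X, x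

/-- The cost of covering `X` with a single center `c`. -/
noncomputable def costPt {d : ℕ} (X : Finset (EuclideanSpace ℝ (Fin d)))
    (c : EuclideanSpace ℝ (Fin d)) : ℝ :=
  ∑ x ∈ X, ‖x - c‖ ^ 2

/-- Sum over all tuples of a function of one coordinate. -/
lemma IKI.sum_eval {ι α : Type*} [Fintype ι] [DecidableEq ι] [Fintype α] (i : ι) (h : α → ℝ) :
    ∑ ω : ι → α, h (ω i) =
      (Fintype.card α : ℝ) ^ (Fintype.card ι - 1) * ∑ x : α, h x := by
  classical
  rw [← Equiv.sum_comp (Equiv.funSplitAt i α).symm (fun ω => h (ω i))]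
  rw [Fintype.sum_prod_type]
  have key : ∀ x : α, ∀ r : {j // j ≠ i} → α,
      ((Equiv.funSplitAt i α).symm (x, r)) i = x := by
    intro x r
    simp [Equiv.funSplitAt, Equiv.piSplitAt]
  simp only [key]
  simp only [Finset.sum_const, Finset.card_univ, nsmul_eq_mul]
  rw [← Finset.mul_sum, Fintype.card_fun, Fintype.card_subtype_compl,
    Fintype.card_subtype_eq]
  push_cast
  ring

lemma IKI.sum_eval2 {ι α : Type*} [Fintype ι] [DecidableEq ι] [Fintype α] {i j : ι}
    (hij : j ≠ i) (h : α → α → ℝ) :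
    ∑ ω : ι → α, h (ω i) (ω j) =
      (Fintype.card α : ℝ) ^ (Fintype.card ι - 2) * ∑ x : α, ∑ y : α, h x y := by
  classical
  rw [← Equiv.sum_comp (Equiv.funSplitAt i α).symm (fun ω => h (ω i) (ω j))]
  rw [Fintype.sum_prod_type]
  have key1 : ∀ x : α, ∀ r : {k // k ≠ i} → α,
      ((Equiv.funSplitAt i α).symm (x, r)) i = x := by
    intro x r
    simp [Equiv.funSplitAt, Equiv.piSplitAt]
  have key2 : ∀ x : α, ∀ r : {k // k ≠ i} → α,
      ((Equiv.funSplitAt i α).symm (x, r)) j = r ⟨j, hij⟩ := by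
    intro x r
    simp [Equiv.funSplitAt, Equiv.piSplitAt, hij]
  simp only [key1, key2]
  have inner : ∀ x : α, ∑ r : {k // k ≠ i} → α, h x (r ⟨j, hij⟩) =
      (Fintype.card α : ℝ) ^ (Fintype.card {k // k ≠ i} - 1) * ∑ y : α, h x y :=
    fun x => IKI.sum_eval (⟨j, hij⟩ : {k // k ≠ i}) (h x)
  simp only [inner]
  rw [← Finset.mul_sum]
  congr 2
  rw [Fintype.card_subtype_compl, Fintype.card_subtype_eq]
  omega

theorem inaba_katoh_imai {d M : ℕ} (hM : 1 ≤ M)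
    (X : Finset (EuclideanSpace ℝ (Fin d))) (hX : X.Nonempty) (δ : ℝ) (hδ : 0 < δ) :
    (1 - δ) * ((X.card : ℝ) ^ M) ≤
      ((Finset.univ.filter (fun ω : Fin M → {x // x ∈ X} =>
          costPt X ((M : ℝ)⁻¹ • ∑ i, ((ω i : EuclideanSpace ℝ (Fin d))))
            ≤ (1 + 1 / (δ * M)) * costPt X (centroid X))).card : ℝ) := by
  classical
  set μ := _root_.centroid X with hμ
  set n := X.card with hn
  have hn0 : 0 < n := hX.card_pos
  have hnR : (0 : ℝ) < n := by exact_mod_cast hn0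
  have hMR : (0 : ℝ) < M := by exact_mod_cast hM
  -- the sum of deviations is zero
  have hsum0 : ∑ x ∈ X, (x - μ) = 0 := by
    rw [Finset.sum_sub_distrib, Finset.sum_const, hμ, _root_.centroid]
    rw [← Nat.cast_smul_eq_nsmul ℝ, smul_smul, ← hn]
    rw [mul_inv_cancel₀ (by exact_mod_cast hn0.ne')]
    simp
  -- cost identity
  have hcost : ∀ c, costPt X c = costPt X μ + n * ‖c - μ‖ ^ 2 := by
    intro c
    have step : ∀ x ∈ X, ‖x - c‖ ^ 2 =
        ‖x - μ‖ ^ 2 + 2 * (inner ℝ (x - μ) (μ - c) : ℝ) + ‖μ - c‖ ^ 2 := by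
      intro x _
      have hxc : x - c = (x - μ) + (μ - c) := by abel
      rw [hxc, norm_add_sq_real]
    rw [costPt, Finset.sum_congr rfl step]
    rw [Finset.sum_add_distrib, Finset.sum_add_distrib]
    rw [← Finset.mul_sum, ← sum_inner, hsum0]
    simp only [inner_zero_left, mul_zero, add_zero]
    rw [Finset.sum_const, nsmul_eq_mul, norm_sub_rev μ c]
    rfl
  -- expectation computation
  have hcardS : Fintype.card {x // x ∈ X} = n := Fintype.card_coe X
  have hsum0' : ∑ x : {x // x ∈ X}, ((x : EuclideanSpace ℝ (Fin d)) - μ) = 0 := by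
    rw [Finset.sum_coe_sort X (fun x => x - μ)]; exact hsum0
  have hΦ' : ∑ x : {x // x ∈ X}, ‖(x : EuclideanSpace ℝ (Fin d)) - μ‖ ^ 2 = costPt X μ := by
    rw [Finset.sum_coe_sort X (fun x => ‖x - μ‖ ^ 2)]; rfl
  have hEcore : ∑ ω : Fin M → {x // x ∈ X},
      ‖∑ i, ((ω i : EuclideanSpace ℝ (Fin d)) - μ)‖ ^ 2
      = M * (n : ℝ) ^ (M - 1) * costPt X μ := by
    have expand : ∀ ω : Fin M → {x // x ∈ X},
        ‖∑ i, ((ω i : EuclideanSpace ℝ (Fin d)) - μ)‖ ^ 2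
        = ∑ i, ∑ j, (inner ℝ ((ω i : EuclideanSpace ℝ (Fin d)) - μ)
            ((ω j : EuclideanSpace ℝ (Fin d)) - μ) : ℝ) := by
      intro ω
      rw [← real_inner_self_eq_norm_sq, sum_inner]
      exact Finset.sum_congr rfl fun i _ => inner_sum _ _ _
    rw [Finset.sum_congr rfl fun ω _ => expand ω]
    rw [Finset.sum_comm]
    rw [Finset.sum_congr rfl fun i (_ : i ∈ Finset.univ) => Finset.sum_comm]
    have inner_term : ∀ i j : Fin M, ∑ ω : Fin M → {x // x ∈ X},
        (inner ℝ ((ω i : EuclideanSpace ℝ (Fin d)) - μ)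
          ((ω j : EuclideanSpace ℝ (Fin d)) - μ) : ℝ)
        = if j = i then (n : ℝ) ^ (M - 1) * costPt X μ else 0 := by
      intro i j
      by_cases hji : j = i
      · subst hji
        rw [if_pos rfl]
        rw [IKI.sum_eval j (fun x : {x // x ∈ X} =>
          (inner ℝ ((x : EuclideanSpace ℝ (Fin d)) - μ) ((x : EuclideanSpace ℝ (Fin d)) - μ) : ℝ))]
        simp only [real_inner_self_eq_norm_sq]
        rw [hΦ', hcardS, Fintype.card_fin]
      · rw [if_neg hji]
        rw [IKI.sum_eval2 hji (fun x y : {x // x ∈ X} =>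
          (inner ℝ ((x : EuclideanSpace ℝ (Fin d)) - μ) ((y : EuclideanSpace ℝ (Fin d)) - μ) : ℝ))]
        have h0 : ∀ x : {x // x ∈ X}, ∑ y : {x // x ∈ X},
            (inner ℝ ((x : EuclideanSpace ℝ (Fin d)) - μ)
              ((y : EuclideanSpace ℝ (Fin d)) - μ) : ℝ) = 0 := by
          intro x
          rw [← inner_sum, hsum0', inner_zero_right]
        rw [Finset.sum_congr rfl fun x _ => h0 x, Finset.sum_const_zero, mul_zero]
    rw [Finset.sum_congr rfl fun i _ => Finset.sum_congr rfl fun j _ => inner_term i j]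
    simp only [Finset.sum_ite_eq', Finset.mem_univ, if_true]
    rw [Finset.sum_const, Finset.card_univ, Fintype.card_fin, nsmul_eq_mul]
    ring
  -- rewrite in terms of sample mean
  have hmean : ∀ ω : Fin M → {x // x ∈ X},
      (M : ℝ)⁻¹ • (∑ i, ((ω i : EuclideanSpace ℝ (Fin d)))) - μ
      = (M : ℝ)⁻¹ • ∑ i, ((ω i : EuclideanSpace ℝ (Fin d)) - μ) := by
    intro ω
    rw [Finset.sum_sub_distrib, smul_sub, Finset.sum_const, Finset.card_univ,
      Fintype.card_fin, ← Nat.cast_smul_eq_nsmul ℝ, smul_smul,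
      inv_mul_cancel₀ hMR.ne', one_smul]
  have hZ : ∑ ω : Fin M → {x // x ∈ X},
      ‖(M : ℝ)⁻¹ • (∑ i, ((ω i : EuclideanSpace ℝ (Fin d)))) - μ‖ ^ 2
      = (n : ℝ) ^ (M - 1) / M * costPt X μ := by
    have : ∀ ω : Fin M → {x // x ∈ X},
        ‖(M : ℝ)⁻¹ • (∑ i, ((ω i : EuclideanSpace ℝ (Fin d)))) - μ‖ ^ 2
        = ((M : ℝ)⁻¹) ^ 2 * ‖∑ i, ((ω i : EuclideanSpace ℝ (Fin d)) - μ)‖ ^ 2 := by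
      intro ω
      rw [hmean ω, norm_smul]
      simp [mul_pow, abs_of_pos (inv_pos.mpr hMR)]
    rw [Finset.sum_congr rfl fun ω _ => this ω, ← Finset.mul_sum, hEcore]
    field_simp
  -- nonnegativity of the cost
  have hΦnn : 0 ≤ costPt X μ := Finset.sum_nonneg fun x _ => sq_nonneg _
  set P : (Fin M → {x // x ∈ X}) → Prop := fun ω =>
    costPt X ((M : ℝ)⁻¹ • ∑ i, ((ω i : EuclideanSpace ℝ (Fin d))))
      ≤ (1 + 1 / (δ * M)) * costPt X μ with hP
  have hcard_univ : (Fintype.card (Fin M → {x // x ∈ X}) : ℝ) = (n : ℝ) ^ M := by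
    rw [Fintype.card_fun, hcardS, Fintype.card_fin]
    push_cast
    ring
  rcases eq_or_lt_of_le hΦnn with hΦ0 | hΦpos
  · -- cost is zero: every sample mean has zero cost
    have hall : ∀ ω : Fin M → {x // x ∈ X}, P ω := by
      intro ω
      have hzero : ∑ ω : Fin M → {x // x ∈ X},
          ‖(M : ℝ)⁻¹ • (∑ i, ((ω i : EuclideanSpace ℝ (Fin d)))) - μ‖ ^ 2 = 0 := by
        rw [hZ, ← hΦ0, mul_zero]
      have hterm : ‖(M : ℝ)⁻¹ • (∑ i, ((ω i : EuclideanSpace ℝ (Fin d)))) - μ‖ ^ 2 = 0 := by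
        have := (Finset.sum_eq_zero_iff_of_nonneg
          (fun ω _ => sq_nonneg (‖(M : ℝ)⁻¹ • (∑ i, ((ω i : EuclideanSpace ℝ (Fin d)))) - μ‖))).mp
          hzero ω (Finset.mem_univ ω)
        exact this
      rw [hP]
      show costPt X _ ≤ _
      rw [hcost, hterm, ← hΦ0]
      simp
    have heq : Finset.univ.filter P = Finset.univ := Finset.filter_true_of_mem fun ω _ => hall ω
    show (1 - δ) * ((n : ℝ) ^ M) ≤ ((Finset.univ.filter P).card : ℝ)
    rw [heq, Finset.card_univ, hcard_univ]
    nlinarith [pow_nonneg hnR.le M, hδ]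
  · -- Markov's inequality
    set B := Finset.univ.filter (fun ω => ¬ P ω) with hB
    have hbad : ∀ ω ∈ B, costPt X μ / (δ * M * n)
        ≤ ‖(M : ℝ)⁻¹ • (∑ i, ((ω i : EuclideanSpace ℝ (Fin d)))) - μ‖ ^ 2 := by
      intro ω hω
      rw [hB, Finset.mem_filter] at hω
      have hω' : (1 + 1 / (δ * M)) * costPt X μ <
          costPt X ((M : ℝ)⁻¹ • ∑ i, ((ω i : EuclideanSpace ℝ (Fin d)))) := not_le.mp hω.2
      have h1 : (1 + 1 / (δ * M)) * costPt X μ <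
          costPt X μ + n * ‖(M : ℝ)⁻¹ • (∑ i, ((ω i : EuclideanSpace ℝ (Fin d)))) - μ‖ ^ 2 := by
        rw [← hcost]
        exact hω'
      have hδM : 0 < δ * M := mul_pos hδ hMR
      set t := ‖(M : ℝ)⁻¹ • (∑ i, ((ω i : EuclideanSpace ℝ (Fin d)))) - μ‖ ^ 2 with ht
      have hexp : (1 + 1 / (δ * (M:ℝ))) * costPt X μ
          = costPt X μ + costPt X μ / (δ * M) := by ring
      have h2 : costPt X μ / (δ * M) < n * t := by linarith
      rw [div_le_iff₀ (mul_pos hδM hnR)]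
      calc costPt X μ = (costPt X μ / (δ * M)) * (δ * M) := by field_simp
        _ ≤ (n * t) * (δ * M) := mul_le_mul_of_nonneg_right h2.le hδM.le
        _ = t * (δ * M * n) := by ring
    have hmarkov : (B.card : ℝ) * (costPt X μ / (δ * M * n))
        ≤ (n : ℝ) ^ (M - 1) / M * costPt X μ := by
      rw [← hZ]
      calc (B.card : ℝ) * (costPt X μ / (δ * M * n))
          ≤ ∑ ω ∈ B, ‖(M : ℝ)⁻¹ • (∑ i, ((ω i : EuclideanSpace ℝ (Fin d)))) - μ‖ ^ 2 := by
            rw [← nsmul_eq_mul]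
            exact Finset.card_nsmul_le_sum B _ _ hbad
        _ ≤ ∑ ω : Fin M → {x // x ∈ X},
            ‖(M : ℝ)⁻¹ • (∑ i, ((ω i : EuclideanSpace ℝ (Fin d)))) - μ‖ ^ 2 :=
            Finset.sum_le_sum_of_subset_of_nonneg (Finset.subset_univ B)
              (fun ω _ _ => sq_nonneg _)
    have hBcard : (B.card : ℝ) ≤ δ * (n : ℝ) ^ M := by
      have hpow : (n : ℝ) ^ (M - 1) * n = (n : ℝ) ^ M := by
        rw [← pow_succ]
        congr 1
        omega
      have hδM : 0 < δ * M := mul_pos hδ hMR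
      have ha : 0 < costPt X μ / (δ * M * n) := div_pos hΦpos (mul_pos hδM hnR)
      have hstep : (B.card : ℝ) * (costPt X μ / (δ * M * n))
          ≤ (δ * (n : ℝ) ^ M) * (costPt X μ / (δ * M * n)) := by
        calc (B.card : ℝ) * (costPt X μ / (δ * M * n))
            ≤ (n : ℝ) ^ (M - 1) / M * costPt X μ := hmarkov
          _ = (δ * (n : ℝ) ^ M) * (costPt X μ / (δ * M * n)) := by
              rw [← hpow]
              field_simp
      exact le_of_mul_le_mul_right hstep ha
    have hsplit : ((Finset.univ.filter P).card : ℝ) + (B.card : ℝ)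
        = (n : ℝ) ^ M := by
      rw [← hcard_univ]
      rw [← Nat.cast_add]
      congr 1
      rw [hB]
      rw [Finset.card_filter_add_card_filter_not]
      exact Finset.card_univ
    have hfin : ((Finset.univ.filter P).card : ℝ) = (n : ℝ) ^ M - B.card := by linarith
    show (1 - δ) * ((n : ℝ) ^ M) ≤ ((Finset.univ.filter P).card : ℝ)
    rw [hfin]
    nlinarith [pow_nonneg hnR.le M]
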